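/- arXiv:math/0203198 — 7 statements merged into one kernel-verified Lean document; each statement's English description precedes it below -/
import Mathlib

section
/- Let r : 𝔤* → 𝔤 be a skew-symmetric linear map such that the r-bracket [·,·]_r satisfies the Jacobi identity (so (𝔤*, [·,·]_r) is a Lie algebra), and assume that r([α,β]_r) - [r(α), r(β)] lies in the center of 𝔤 for all α, β ∈ 𝔤*. Then the bilinear product on 𝔤* defined by αβ := ad*_{r(α)}β is left symmetric (an LSA structure) and is compatible with the Lie bracket [·,·]_r, i.e. αβ - βα = [α,β]_r for all α, β ∈ 𝔤*. -/
/-- The coadjoint action of `x : L` on the dual: `⟨coad x α, y⟩ = -⟨α, [x,y]⟩`. -/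
noncomputable def coad {L : Type*} [LieRing L] [LieAlgebra ℝ L]
    (x : L) (α : Module.Dual ℝ L) : Module.Dual ℝ L :=
  -(α ∘ₗ (LieAlgebra.ad ℝ L x))

/-- The `r`-bracket `[α,β]_r = ad*_{r α} β - ad*_{r β} α` on the dual. -/
noncomputable def rb {L : Type*} [LieRing L] [LieAlgebra ℝ L]
    (r : Module.Dual ℝ L →ₗ[ℝ] L) (α β : Module.Dual ℝ L) : Module.Dual ℝ L :=
  coad (r α) β - coad (r β) α

/-- if the `r`-bracket satisfies the Jacobi identity and
`r([α,β]_r) - [r α, r β]` is central, then `αβ := ad*_{r α} β` is a left symmetric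
product compatible with `[·,·]_r`. -/
theorem stmt0 {L : Type*} [LieRing L] [LieAlgebra ℝ L] [FiniteDimensional ℝ L]
    (r : Module.Dual ℝ L →ₗ[ℝ] L)
    (hskew : ∀ α β : Module.Dual ℝ L, α (r β) = - β (r α))
    (hjac : ∀ α β γ : Module.Dual ℝ L,
      rb r (rb r α β) γ + rb r (rb r β γ) α + rb r (rb r γ α) β = 0)
    (hcenter : ∀ α β : Module.Dual ℝ L, ∀ y : L,
      ⁅r (rb r α β) - ⁅r α, r β⁆, y⁆ = 0) :
    (∀ α β γ : Module.Dual ℝ L,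
      coad (r (coad (r α) β)) γ - coad (r α) (coad (r β) γ)
        = coad (r (coad (r β) α)) γ - coad (r β) (coad (r α) γ)) ∧
    (∀ α β : Module.Dual ℝ L,
      coad (r α) β - coad (r β) α = rb r α β) := by
  refine ⟨?_, fun α β => rfl⟩
  intro α β γ
  ext y
  have hc := hcenter α β y
  rw [sub_lie, sub_eq_zero] at hc
  have hc' := congrArg γ hc
  have hr : r (rb r α β) = r (coad (r α) β) - r (coad (r β) α) := by
    simp [rb, map_sub]
  rw [hr] at hc'
  simp only [coad, LinearMap.sub_apply, LinearMap.neg_apply, LinearMap.comp_apply,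
    LieAlgebra.ad_apply, map_neg, neg_neg, sub_lie, neg_lie, map_sub, lie_lie] at hc' ⊢
  linarith
end

section
/- Let r : 𝔤* → 𝔤 be a skew-symmetric linear map satisfying the classical Yang–Baxter equation [r,r] = 0. Then the r-bracket [α,β]_r := ad*_{r(α)}β - ad*_{r(β)}α is a Lie bracket on 𝔤*: it is bilinear, antisymmetric, and satisfies the Jacobi identity. -/
/-- `[r,r](α,β,γ) := ⟨γ,[r α, r β]⟩ + ⟨α,[r β, r γ]⟩ + ⟨β,[r γ, r α]⟩`. -/
def cybe {L : Type*} [LieRing L] [LieAlgebra ℝ L]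
    (r : Module.Dual ℝ L →ₗ[ℝ] L) (α β γ : Module.Dual ℝ L) : ℝ :=
  γ ⁅r α, r β⁆ + α ⁅r β, r γ⁆ + β ⁅r γ, r α⁆

lemma rb_apply' {L : Type*} [LieRing L] [LieAlgebra ℝ L]
    (r : Module.Dual ℝ L →ₗ[ℝ] L) (α β : Module.Dual ℝ L) (x : L) :
    rb r α β x = α ⁅r β, x⁆ - β ⁅r α, x⁆ := by
  simp [rb, coad, LieAlgebra.ad_apply]
  abel

lemma jterm {L : Type*} [LieRing L] [LieAlgebra ℝ L]
    (r : Module.Dual ℝ L →ₗ[ℝ] L)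
    (hskew : ∀ α β : Module.Dual ℝ L, α (r β) = - β (r α))
    (hcybe : ∀ α β γ : Module.Dual ℝ L, cybe r α β γ = 0)
    (α β γ : Module.Dual ℝ L) (x : L) :
    rb r (rb r α β) γ x
      = α ⁅r β, ⁅r γ, x⁆⁆ - β ⁅r α, ⁅r γ, x⁆⁆ + γ ⁅x, ⁅r α, r β⁆⁆ := by
  rw [rb_apply']
  have h1 : rb r α β ⁅r γ, x⁆ = α ⁅r β, ⁅r γ, x⁆⁆ - β ⁅r α, ⁅r γ, x⁆⁆ := rb_apply' ..
  set δ : Module.Dual ℝ L := coad x γ with hδ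
  have hδa : ∀ y : L, δ y = γ ⁅y, x⁆ := by
    intro y
    simp only [hδ, coad, LinearMap.neg_apply, LinearMap.coe_comp, Function.comp_apply,
      LieAlgebra.ad_apply]
    rw [← lie_skew x y, map_neg, neg_neg]
  have h2 : γ ⁅r (rb r α β), x⁆ = - (rb r α β) (r δ) := by
    rw [← hδa, hskew δ (rb r α β)]
  have h3 : (rb r α β) (r δ) = α ⁅r β, r δ⁆ - β ⁅r α, r δ⁆ := rb_apply' ..
  have h4 := hcybe α β δ
  unfold cybe at h4
  have h5 : δ ⁅r α, r β⁆ = γ ⁅⁅r α, r β⁆, x⁆ := hδa _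
  rw [h1, h2, h3]
  have h6 : γ ⁅x, ⁅r α, r β⁆⁆ = - γ ⁅⁅r α, r β⁆, x⁆ := by
    rw [← lie_skew, map_neg]
  have h7 : β ⁅r δ, r α⁆ = - β ⁅r α, r δ⁆ := by rw [← lie_skew, map_neg]
  rw [h6, ← h5]
  rw [h7] at h4
  linarith

/-- for a skew-symmetric solution `r` of the CYBE, the `r`-bracket is a
Lie bracket on `𝔤*`: bilinear, antisymmetric, and satisfying the Jacobi identity. -/
theorem stmt3 {L : Type*} [LieRing L] [LieAlgebra ℝ L] [FiniteDimensional ℝ L]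
    (r : Module.Dual ℝ L →ₗ[ℝ] L)
    (hskew : ∀ α β : Module.Dual ℝ L, α (r β) = - β (r α))
    (hcybe : ∀ α β γ : Module.Dual ℝ L, cybe r α β γ = 0) :
    (∀ α α' β : Module.Dual ℝ L, rb r (α + α') β = rb r α β + rb r α' β) ∧
    (∀ (c : ℝ) (α β : Module.Dual ℝ L), rb r (c • α) β = c • rb r α β) ∧
    (∀ α β β' : Module.Dual ℝ L, rb r α (β + β') = rb r α β + rb r α β') ∧
    (∀ (c : ℝ) (α β : Module.Dual ℝ L), rb r α (c • β) = c • rb r α β) ∧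
    (∀ α β : Module.Dual ℝ L, rb r α β = - rb r β α) ∧
    (∀ α β γ : Module.Dual ℝ L,
      rb r (rb r α β) γ + rb r (rb r β γ) α + rb r (rb r γ α) β = 0) := by
  refine ⟨?_, ?_, ?_, ?_, ?_, ?_⟩
  · intro α α' β; ext x
    simp [rb_apply']; ring
  · intro c α β; ext x
    simp [rb_apply']; ring
  · intro α β β'; ext x
    simp [rb_apply']; ring
  · intro c α β; ext x
    simp [rb_apply']; ring
  · intro α β; ext x
    simp [rb_apply']
  · intro α β γ; ext x
    simp only [LinearMap.add_apply, LinearMap.zero_apply,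
      jterm r hskew hcybe α β γ x, jterm r hskew hcybe β γ α x,
      jterm r hskew hcybe γ α β x]
    set A := r α; set B := r β; set C := r γ
    have j1 : (⁅B, ⁅C, x⁆⁆ : L) - ⁅C, ⁅B, x⁆⁆ + ⁅x, ⁅B, C⁆⁆ = 0 := by
      rw [← lie_lie, ← lie_skew x]; abel
    have j2 : (⁅C, ⁅A, x⁆⁆ : L) - ⁅A, ⁅C, x⁆⁆ + ⁅x, ⁅C, A⁆⁆ = 0 := by
      rw [← lie_lie, ← lie_skew x]; abel
    have j3 : (⁅A, ⁅B, x⁆⁆ : L) - ⁅B, ⁅A, x⁆⁆ + ⁅x, ⁅A, B⁆⁆ = 0 := by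
      rw [← lie_lie, ← lie_skew x]; abel
    have Hα : α ⁅B, ⁅C, x⁆⁆ - α ⁅C, ⁅B, x⁆⁆ + α ⁅x, ⁅B, C⁆⁆ = 0 := by
      rw [← map_sub, ← map_add, j1, map_zero]
    have Hβ : β ⁅C, ⁅A, x⁆⁆ - β ⁅A, ⁅C, x⁆⁆ + β ⁅x, ⁅C, A⁆⁆ = 0 := by
      rw [← map_sub, ← map_add, j2, map_zero]
    have Hγ : γ ⁅A, ⁅B, x⁆⁆ - γ ⁅B, ⁅A, x⁆⁆ + γ ⁅x, ⁅A, B⁆⁆ = 0 := by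
      rw [← map_sub, ← map_add, j3, map_zero]
    linarith
end

section
/- Let r : 𝔤* → 𝔤 be a skew-symmetric solution of the classical Yang–Baxter equation, and equip 𝔤* with the left symmetric product αβ := ad*_{r(α)}β. Then the kernel Ker(r) is an abelian two-sided ideal of this left symmetric algebra: for every α ∈ Ker(r) and β ∈ 𝔤* one has αβ = 0 and βα ∈ Ker(r); in particular Ker(r) is an ideal of the Lie algebra (𝔤*, [·,·]_r) on which the bracket vanishes. -/
/-- for a skew-symmetric solution `r` of the CYBE, `Ker r` is an abelian
two-sided ideal of the LSA `(𝔤*, αβ = ad*_{r α} β)`: for `α ∈ Ker r` and `β ∈ 𝔤*`,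
`αβ = 0` and `βα ∈ Ker r`; in particular `Ker r` is an ideal of `(𝔤*, [·,·]_r)` on
which the bracket vanishes. -/
theorem stmt6 {L : Type*} [LieRing L] [LieAlgebra ℝ L] [FiniteDimensional ℝ L]
    (r : Module.Dual ℝ L →ₗ[ℝ] L)
    (hskew : ∀ α β : Module.Dual ℝ L, α (r β) = - β (r α))
    (hcybe : ∀ α β γ : Module.Dual ℝ L, cybe r α β γ = 0) :
    (∀ α ∈ LinearMap.ker r, ∀ β : Module.Dual ℝ L, coad (r α) β = 0) ∧
    (∀ α ∈ LinearMap.ker r, ∀ β : Module.Dual ℝ L, coad (r β) α ∈ LinearMap.ker r) ∧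
    (∀ α ∈ LinearMap.ker r, ∀ β : Module.Dual ℝ L, rb r β α ∈ LinearMap.ker r) ∧
    (∀ α ∈ LinearMap.ker r, ∀ α' ∈ LinearMap.ker r, rb r α α' = 0) := by

  have h1 : ∀ α ∈ LinearMap.ker r, ∀ β : Module.Dual ℝ L, coad (r α) β = 0 := by
    intro α hα β
    rw [LinearMap.mem_ker] at hα
    ext y
    simp [coad, hα]
  have h2 : ∀ α ∈ LinearMap.ker r, ∀ β : Module.Dual ℝ L,
      coad (r β) α ∈ LinearMap.ker r := by
    intro α hα β
    rw [LinearMap.mem_ker] at hα ⊢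
    rw [← Module.forall_dual_apply_eq_zero_iff (R := ℝ)]
    intro γ
    have hc := hcybe α β γ
    simp [cybe, hα] at hc
    have := hskew γ (coad (r β) α)
    rw [this]
    simp [coad, hc]
  refine ⟨h1, h2, ?_, ?_⟩
  · intro α hα β
    have := h2 α hα β
    have h0 := h1 α hα β
    simpa [rb, h0] using this
  · intro α hα α' hα'
    simp [rb, h1 α hα α', h1 α' hα' α]
end

section
/- Let r : 𝔤* → 𝔤 be a skew-symmetric solution of the classical Yang–Baxter equation. Then the linear map Ξ : 𝔤 × 𝔤* → 𝔤 × 𝔤*, Ξ(x,α) := (x + r(α), α), is a Lie algebra isomorphism from the double Lie algebra 𝒟(𝔤) onto the semidirect product 𝔤 ⋉_{ad*} 𝔤*, and it is an isometry for the canonical pairing ⟨(x,α),(y,β)⟩ := α(y) + β(x) on both sides. -/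
/-- The bracket of the double Lie algebra `𝒟(𝔤) = 𝔤 × 𝔤*`, where `cstar` is the
coadjoint action of `(𝔤*, [·,·]_r)` on `𝔤`. -/
noncomputable def dbr {L : Type*} [LieRing L] [LieAlgebra ℝ L]
    (r : Module.Dual ℝ L →ₗ[ℝ] L) (cstar : Module.Dual ℝ L → L → L)
    (u v : L × Module.Dual ℝ L) : L × Module.Dual ℝ L :=
  (⁅u.1, v.1⁆ + cstar u.2 v.1 - cstar v.2 u.1,
    rb r u.2 v.2 + coad u.1 v.2 - coad v.1 u.2)

/-- The bracket of the semidirect product `𝔤 ⋉_{ad*} 𝔤*`. -/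
noncomputable def sdr {L : Type*} [LieRing L] [LieAlgebra ℝ L]
    (u v : L × Module.Dual ℝ L) : L × Module.Dual ℝ L :=
  (⁅u.1, v.1⁆, coad u.1 v.2 - coad v.1 u.2)

/-- The canonical pairing `⟨(x,α),(y,β)⟩ = α y + β x` on `𝔤 × 𝔤*`. -/
def dpair {L : Type*} [LieRing L] [LieAlgebra ℝ L]
    (u v : L × Module.Dual ℝ L) : ℝ := u.2 v.1 + v.2 u.1

lemma coad_apply {L : Type*} [LieRing L] [LieAlgebra ℝ L]
    (x : L) (α : Module.Dual ℝ L) (y : L) : coad x α y = -α ⁅x, y⁆ := rfl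

lemma coad_add_left {L : Type*} [LieRing L] [LieAlgebra ℝ L]
    (x x' : L) (α : Module.Dual ℝ L) : coad (x + x') α = coad x α + coad x' α := by
  ext y; simp [coad_apply, mul_comm]; ring

/-- for a skew-symmetric solution `r` of the CYBE, the linear map
`Ξ(x,α) = (x + r α, α)` is a Lie algebra isomorphism from the double `𝒟(𝔤)` onto
`𝔤 ⋉_{ad*} 𝔤*` and an isometry of the canonical pairings. -/
theorem stmt7 {L : Type*} [LieRing L] [LieAlgebra ℝ L] [FiniteDimensional ℝ L]
    (r : Module.Dual ℝ L →ₗ[ℝ] L)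
    (hskew : ∀ α β : Module.Dual ℝ L, α (r β) = - β (r α))
    (hcybe : ∀ α β γ : Module.Dual ℝ L, cybe r α β γ = 0)
    (cstar : Module.Dual ℝ L → L → L)
    (hcstar : ∀ (α : Module.Dual ℝ L) (x : L) (β : Module.Dual ℝ L),
      β (cstar α x) = -((rb r α β) x))
    (Xi : L × Module.Dual ℝ L →ₗ[ℝ] L × Module.Dual ℝ L)
    (hXi : ∀ u : L × Module.Dual ℝ L, Xi u = (u.1 + r u.2, u.2)) :
    Function.Bijective Xi ∧
    (∀ u v : L × Module.Dual ℝ L, Xi (dbr r cstar u v) = sdr (Xi u) (Xi v)) ∧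
    (∀ u v : L × Module.Dual ℝ L, dpair (Xi u) (Xi v) = dpair u v) := by
  refine ⟨⟨?_, ?_⟩, ?_, ?_⟩
  · intro u v huv
    rw [hXi u, hXi v, Prod.ext_iff] at huv
    obtain ⟨h1, h2⟩ := huv
    simp only at h1 h2
    rw [h2] at h1
    exact Prod.ext (add_right_cancel h1) h2
  · intro u
    exact ⟨(u.1 - r u.2, u.2), by rw [hXi]; simp⟩
  · rintro ⟨x, α⟩ ⟨y, β⟩
    rw [hXi, hXi, hXi]
    simp only [dbr, sdr, rb]
    refine Prod.ext ?_ ?_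
    · -- first component, via dual separation
      simp only
      rw [← sub_eq_zero, ← Module.forall_dual_apply_eq_zero_iff ℝ]
      intro γ
      rw [map_sub, sub_eq_zero]
      simp only [map_add, map_sub, coad_apply, hcstar,
        LinearMap.sub_apply, LinearMap.add_apply, lie_add, add_lie, map_neg,
        LinearMap.neg_apply]
      rw [hskew γ, hskew γ, hskew γ, hskew γ]
      simp only [rb, coad_apply, LinearMap.sub_apply, LinearMap.neg_apply, map_neg, neg_neg,
        LinearMap.comp_apply, LieAlgebra.ad_apply]
      have h1 := hcybe α β γ
      simp only [cybe] at h1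
      have e1 : α ⁅r γ, y⁆ = - α ⁅y, r γ⁆ := by rw [← lie_skew, map_neg]
      have e2 : β ⁅r γ, x⁆ = - β ⁅x, r γ⁆ := by rw [← lie_skew, map_neg]
      have e3 : γ ⁅r β, x⁆ = - γ ⁅x, r β⁆ := by rw [← lie_skew, map_neg]
      have e4 : β ⁅r γ, r α⁆ = - β ⁅r α, r γ⁆ := by rw [← lie_skew, map_neg]
      have e5 : α ⁅r β, r γ⁆ = - α ⁅r γ, r β⁆ := by rw [← lie_skew, map_neg]
      linarith [hcybe α β γ]
    · simp only [coad_add_left]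
      abel
  · intro u v
    rw [hXi, hXi]
    simp [dpair, hskew u.2 v.2]
    ring
end

section
/- Let A and B be left symmetric algebras with underlying Lie algebras A₋ and B₋ (brackets given by commutators), and let θ₁ : A₋ → gl(B) and θ₂ : B₋ → gl(A) be Lie algebra representations satisfying (θ₁(a)b)b' + b(θ₁(a)b') - θ₁(a)(bb') = θ₁(θ₂(b)a)b' and (θ₂(b)a)a' + a(θ₂(b)a') - θ₂(b)(aa') = θ₂(θ₁(a)b)a' for all a, a' ∈ A, b, b' ∈ B. Then the product (a,b)(a',b') := (aa' + θ₂(b)a', bb' + θ₁(a)b') on the vector space A × B is left symmetric, and its commutator Lie bracket is [(a,b),(a',b')] = ([a,a'] + θ₂(b)a' - θ₂(b')a, [b,b'] + θ₁(a)b' - θ₁(a')b). -/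
/-- The product `(a,b)(a',b') = (aa' + θ₂(b)a', bb' + θ₁(a)b')` on `A × B`. -/
def lprod {A B : Type*} [AddCommGroup A] [Module ℝ A] [AddCommGroup B] [Module ℝ B]
    (mA : A →ₗ[ℝ] A →ₗ[ℝ] A) (mB : B →ₗ[ℝ] B →ₗ[ℝ] B)
    (th1 : A →ₗ[ℝ] Module.End ℝ B) (th2 : B →ₗ[ℝ] Module.End ℝ A)
    (u v : A × B) : A × B :=
  (mA u.1 v.1 + th2 u.2 v.1, mB u.2 v.2 + th1 u.1 v.2)

/-- if the LSAs `A`, `B` are `(θ₁,θ₂)`-linked, then the product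
`(a,b)(a',b') = (aa' + θ₂(b)a', bb' + θ₁(a)b')` on `A × B` is left symmetric, and its
commutator is the bracket
`([a,a'] + θ₂(b)a' - θ₂(b')a, [b,b'] + θ₁(a)b' - θ₁(a')b)`. -/
theorem stmt10 {A B : Type*}
    [AddCommGroup A] [Module ℝ A] [FiniteDimensional ℝ A]
    [AddCommGroup B] [Module ℝ B] [FiniteDimensional ℝ B]
    (mA : A →ₗ[ℝ] A →ₗ[ℝ] A) (mB : B →ₗ[ℝ] B →ₗ[ℝ] B)
    (hA : ∀ a a' a'' : A,
      mA (mA a a') a'' - mA a (mA a' a'') = mA (mA a' a) a'' - mA a' (mA a a''))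
    (hB : ∀ b b' b'' : B,
      mB (mB b b') b'' - mB b (mB b' b'') = mB (mB b' b) b'' - mB b' (mB b b''))
    (th1 : A →ₗ[ℝ] Module.End ℝ B) (th2 : B →ₗ[ℝ] Module.End ℝ A)
    (hrep1 : ∀ a a' : A,
      th1 (mA a a' - mA a' a) = th1 a * th1 a' - th1 a' * th1 a)
    (hrep2 : ∀ b b' : B,
      th2 (mB b b' - mB b' b) = th2 b * th2 b' - th2 b' * th2 b)
    (h12 : ∀ (a : A) (b b' : B),
      mB (th1 a b) b' + mB b (th1 a b') - th1 a (mB b b') = th1 (th2 b a) b')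
    (h13 : ∀ (b : B) (a a' : A),
      mA (th2 b a) a' + mA a (th2 b a') - th2 b (mA a a') = th2 (th1 a b) a') :
    (∀ u v w : A × B,
      lprod mA mB th1 th2 (lprod mA mB th1 th2 u v) w
          - lprod mA mB th1 th2 u (lprod mA mB th1 th2 v w)
        = lprod mA mB th1 th2 (lprod mA mB th1 th2 v u) w
          - lprod mA mB th1 th2 v (lprod mA mB th1 th2 u w)) ∧
    (∀ u v : A × B,
      lprod mA mB th1 th2 u v - lprod mA mB th1 th2 v u
        = (mA u.1 v.1 - mA v.1 u.1 + th2 u.2 v.1 - th2 v.2 u.1,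
           mB u.2 v.2 - mB v.2 u.2 + th1 u.1 v.2 - th1 v.1 u.2)) := by
  constructor
  · rintro ⟨a, b⟩ ⟨a', b'⟩ ⟨a'', b''⟩
    have h2 := LinearMap.congr_fun (hrep2 b b') a''
    have h1 := LinearMap.congr_fun (hrep1 a a') b''
    simp only [LinearMap.sub_apply, Module.End.mul_apply, map_sub] at h1 h2
    simp only [lprod, map_add, LinearMap.add_apply, Prod.mk_sub_mk, Prod.mk.injEq]
    constructor
    · linear_combination (norm := module) hA a a' a'' + h13 b a' a'' - h13 b' a a'' + h2
    · linear_combination (norm := module) hB b b' b'' + h12 a b' b'' - h12 a' b b'' + h1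
  · intro u v
    simp only [lprod, Prod.mk_sub_mk, Prod.mk.injEq]
    constructor <;> abel
end

section
/- Let V be a left symmetric algebra and let A, B ⊆ V be left ideals (i.e. subspaces with V·A ⊆ A and V·B ⊆ B) such that V = A ⊕ B. Define θ₁(a)b := ab for a ∈ A, b ∈ B, and θ₂(b)a := ba. Then θ₁ is a Lie algebra representation of the underlying Lie algebra A₋ on B, θ₂ is a Lie algebra representation of B₋ on A, they satisfy (θ₁(a)b)b' + b(θ₁(a)b') - θ₁(a)(bb') = θ₁(θ₂(b)a)b' and (θ₂(b)a)a' + a(θ₂(b)a') - θ₂(b)(aa') = θ₂(θ₁(a)b)a' for all a, a' ∈ A, b, b' ∈ B, and the product (a,b)(a',b') := (aa' + θ₂(b)a', bb' + θ₁(a)b') on A × B coincides with the original product of V under the direct sum identification. -/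
/-- if a left symmetric algebra `V` is the direct sum `V = A ⊕ B` of two
left ideals `A`, `B`, then `θ₁(a)b := ab` and `θ₂(b)a := ba` are Lie algebra
representations of the underlying Lie algebras `A₋` on `B` and `B₋` on `A`, they
satisfy the linking conditions (12) and (13), and the product
`(a,b)(a',b') = (aa' + θ₂(b)a', bb' + θ₁(a)b')` coincides with the original product. -/
theorem stmt11 {V : Type*} [AddCommGroup V] [Module ℝ V] [FiniteDimensional ℝ V]
    (mul : V →ₗ[ℝ] V →ₗ[ℝ] V)
    (hlsa : ∀ x y z : V,
      mul (mul x y) z - mul x (mul y z) = mul (mul y x) z - mul y (mul x z))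
    (A B : Submodule ℝ V) (hcompl : IsCompl A B)
    (hA : ∀ v : V, ∀ a ∈ A, mul v a ∈ A)
    (hB : ∀ v : V, ∀ b ∈ B, mul v b ∈ B) :
    -- θ₁ is a representation of A₋ on B (with values in B):
    (∀ a ∈ A, ∀ b ∈ B, mul a b ∈ B) ∧
    (∀ a ∈ A, ∀ a' ∈ A, ∀ b ∈ B,
      mul (mul a a' - mul a' a) b = mul a (mul a' b) - mul a' (mul a b)) ∧
    -- θ₂ is a representation of B₋ on A (with values in A):
    (∀ b ∈ B, ∀ a ∈ A, mul b a ∈ A) ∧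
    (∀ b ∈ B, ∀ b' ∈ B, ∀ a ∈ A,
      mul (mul b b' - mul b' b) a = mul b (mul b' a) - mul b' (mul b a)) ∧
    -- the linking condition (12):
    (∀ a ∈ A, ∀ b ∈ B, ∀ b' ∈ B,
      mul (mul a b) b' + mul b (mul a b') - mul a (mul b b') = mul (mul b a) b') ∧
    -- the linking condition (13):
    (∀ b ∈ B, ∀ a ∈ A, ∀ a' ∈ A,
      mul (mul b a) a' + mul a (mul b a') - mul b (mul a a') = mul (mul a b) a') ∧
    -- the product on A × B coincides with the original product of V:
    (∀ a ∈ A, ∀ a' ∈ A, ∀ b ∈ B, ∀ b' ∈ B,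
      mul (a + b) (a' + b') = (mul a a' + mul b a') + (mul b b' + mul a b') ∧
      mul a a' + mul b a' ∈ A ∧ mul b b' + mul a b' ∈ B) := by
  refine ⟨fun a _ b hb => hB a b hb,
    fun a _ a' _ b _ => ?_,
    fun b _ a ha => hA b a ha,
    fun b _ b' _ a _ => ?_,
    fun a _ b _ b' _ => ?_,
    fun b _ a _ a' _ => ?_,
    fun a ha a' ha' b hb b' hb' => ⟨?_, A.add_mem (hA a a' ha') (hA b a' ha'),
      B.add_mem (hB b b' hb') (hB a b' hb')⟩⟩
  · have := hlsa a a' b; simp only [map_sub, LinearMap.sub_apply]; linear_combination (norm := module) this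
  · have := hlsa b b' a; simp only [map_sub, LinearMap.sub_apply]; linear_combination (norm := module) this
  · have := hlsa a b b'; linear_combination (norm := module) this
  · have := hlsa b a a'; linear_combination (norm := module) this
  · simp only [map_add, LinearMap.add_apply]; abel
end

section
/- Let (𝔤, ω) be a symplectic Lie algebra with product xy on 𝔤 defined by ω(xy,z) = -ω(y,[x,z]). Then for every x ∈ 𝔤, the right multiplication R_x : y ↦ yx satisfies tr(R_x) = -2 tr(ad_x). In particular all right multiplications have zero trace if and only if 𝔤 is unimodular. -/
/-- in a symplectic Lie algebra `(𝔤, ω)` with product defined by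
`ω(xy,z) = -ω(y,[x,z])`, every right multiplication `R_x : y ↦ yx` satisfies
`tr(R_x) = -2 tr(ad_x)`; in particular all right multiplications have zero trace iff
`𝔤` is unimodular. -/
theorem stmt16 {L : Type*} [LieRing L] [LieAlgebra ℝ L] [FiniteDimensional ℝ L]
    (ω : L →ₗ[ℝ] Module.Dual ℝ L)
    (hskew : ∀ x y : L, ω x y = - ω y x)
    (hnondeg : ∀ x : L, ω x = 0 → x = 0)
    (hclosed : ∀ x y z : L, ω ⁅x, y⁆ z + ω ⁅y, z⁆ x + ω ⁅z, x⁆ y = 0)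
    (p : L →ₗ[ℝ] L →ₗ[ℝ] L)
    (hp : ∀ x y z : L, ω (p x y) z = -(ω y ⁅x, z⁆))
    (Rf : L → (L →ₗ[ℝ] L))
    (hRf : ∀ x y : L, Rf x y = p y x) :
    (∀ x : L, LinearMap.trace ℝ L (Rf x) = -2 * LinearMap.trace ℝ L (LieAlgebra.ad ℝ L x)) ∧
    ((∀ x : L, LinearMap.trace ℝ L (Rf x) = 0) ↔
      (∀ x : L, LinearMap.trace ℝ L (LieAlgebra.ad ℝ L x) = 0)) := by
  -- ω is bijective
  have hinj : Function.Injective ω :=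
    LinearMap.ker_eq_bot.mp (LinearMap.ker_eq_bot'.mpr hnondeg)
  have hsurj : Function.Surjective ω :=
    (LinearMap.injective_iff_surjective_of_finrank_eq_finrank
      (Subspace.dual_finrank_eq (K := ℝ) (V := L)).symm).mp hinj
  let e : L ≃ₗ[ℝ] Module.Dual ℝ L := LinearEquiv.ofBijective ω ⟨hinj, hsurj⟩
  -- trace of left multiplication
  have hL : ∀ x : L, LinearMap.trace ℝ L (p x) = - LinearMap.trace ℝ L (LieAlgebra.ad ℝ L x) := by
    intro x
    have hpe : p x = e.symm.conj (-(LieAlgebra.ad ℝ L x).dualMap) := by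
      apply LinearMap.ext; intro y
      apply hinj
      apply LinearMap.ext; intro z
      have h1 : ω (e.symm.conj (-(LieAlgebra.ad ℝ L x).dualMap) y) =
          (-(LieAlgebra.ad ℝ L x).dualMap) (ω y) := by
        simp [LinearEquiv.conj_apply, e, LinearEquiv.ofBijective]
      rw [hp, h1]
      simp [LinearMap.dualMap_apply, LieAlgebra.ad_apply]
    rw [hpe, LinearMap.trace_conj']
    have hneg : (LinearMap.trace ℝ (Module.Dual ℝ L)) (-(LieAlgebra.ad ℝ L x).dualMap)
        = -(LinearMap.trace ℝ (Module.Dual ℝ L)) ((LieAlgebra.ad ℝ L x).dualMap) :=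
      by
        rw [show (-(LieAlgebra.ad ℝ L x).dualMap : Module.Dual ℝ L →ₗ[ℝ] Module.Dual ℝ L)
          = (-1 : ℝ) • (LieAlgebra.ad ℝ L x).dualMap by module]
        rw [map_smul]
        simp
    rw [hneg, LinearMap.dualMap_def, LinearMap.trace_transpose']
  -- R_x = L_x - ad_x
  have hR : ∀ x : L, Rf x = p x - LieAlgebra.ad ℝ L x := by
    intro x
    apply LinearMap.ext; intro y
    have key : p y x - p x y + ⁅x, y⁆ = 0 := by
      apply hnondeg
      apply LinearMap.ext; intro z
      have hc := hclosed x y z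
      have hzx : (⁅z, x⁆ : L) = -⁅x, z⁆ := by rw [← lie_skew]
      rw [hzx, map_neg, LinearMap.neg_apply] at hc
      simp only [map_sub, map_add, LinearMap.sub_apply, LinearMap.add_apply,
        LinearMap.zero_apply, hp y x z, hp x y z, hskew x ⁅y, z⁆, hskew y ⁅x, z⁆]
      linarith
    rw [LinearMap.sub_apply, hRf, LieAlgebra.ad_apply]
    have : p y x = p x y - ⁅x, y⁆ := by
      have := key
      abel_nf at this ⊢
      linear_combination (norm := abel_nf) this
    rw [this]
  have main : ∀ x : L, LinearMap.trace ℝ L (Rf x)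
      = -2 * LinearMap.trace ℝ L (LieAlgebra.ad ℝ L x) := by
    intro x
    rw [hR x, map_sub, hL x]; ring
  refine ⟨main, ?_⟩
  constructor
  · intro h x
    have := main x
    rw [h x] at this
    linarith
  · intro h x
    rw [main x, h x]; ring
end
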